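/- Let R be an associative unital ℂ-algebra, ε : R → ℂ a ℂ-algebra homomorphism, n ≥ 2, and 1 ≤ i ≠ j ≤ n. Let M be a module over the Lie algebra 𝔤𝔩_n(R), let m ∈ ℕ, and let v ∈ M satisfy: (E_{ji}a)·v = 0 for all a ∈ R; (E_{ii}a − E_{jj}a)·v = m·ε(a)·v for all a ∈ R; and the (m+1)-fold iterated action (E_{ij}1)^{m+1}·v = 0. Then for every P ∈ R with ε(P) = 0, one has (E_{ij}P^m)·v = 0. -/

import Mathlib

namespace Stmt14Aux

/-- Formal result of commuting `h_d` past a product of `e`-factors: merge `d`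
into one factor. -/
def hMs (d : ℕ) : List ℕ → Multiset (List ℕ)
  | [] => 0
  | k :: L => ((hMs d L).map (k :: ·)) + {(k + d) :: L}

/-- Formal result of applying `f_l` to a product of `e`-factors applied to `v`:
merge a pair of factors `a, b ↦ a + b + l`. -/
def pMs (l : ℕ) : List ℕ → Multiset (List ℕ)
  | [] => 0
  | k :: L => ((pMs l L).map (k :: ·)) + hMs (k + l) L

/-- States after `r` applications of `f_1` to `e_0^{m+1} v`. -/
def SIt (m : ℕ) : ℕ → Multiset (List ℕ)
  | 0 => {List.replicate (m + 1) 0}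
  | r + 1 => (SIt m r).bind (pMs 1)

lemma hMs_mem {d : ℕ} : ∀ {L L' : List ℕ}, L' ∈ hMs d L →
    L'.length = L.length ∧ L'.sum = L.sum + d
  | [], L', h => by simp [hMs] at h
  | k :: L, L', h => by
    simp only [hMs, Multiset.mem_add, Multiset.mem_map, Multiset.mem_singleton] at h
    rcases h with ⟨L'', hmem, rfl⟩ | rfl
    · obtain ⟨hl, hs⟩ := hMs_mem hmem
      constructor
      · simp [hl]
      · simp [hs]; omega
    · constructor
      · simp
      · simp; omega

lemma pMs_mem {l : ℕ} : ∀ {L L' : List ℕ}, L' ∈ pMs l L →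
    L'.length + 1 = L.length ∧ L'.sum = L.sum + l
  | [], L', h => by simp [pMs] at h
  | k :: L, L', h => by
    simp only [pMs, Multiset.mem_add, Multiset.mem_map] at h
    rcases h with ⟨L'', hmem, rfl⟩ | hmem
    · obtain ⟨hl, hs⟩ := pMs_mem hmem
      constructor
      · simpa using hl
      · simp at hs ⊢; omega
    · obtain ⟨hl, hs⟩ := hMs_mem hmem
      constructor
      · simp [hl]
      · simp [hs]; omega

lemma pMs_ne_zero {l a b : ℕ} {L : List ℕ} : pMs l (a :: b :: L) ≠ 0 := by
  have hmem : ((b + (a + l)) :: L) ∈ pMs l (a :: b :: L) := by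
    simp [pMs, hMs]
  intro h
  rw [h] at hmem
  exact absurd hmem (Multiset.notMem_zero _)

lemma SIt_spec (m : ℕ) : ∀ r, r ≤ m →
    (SIt m r ≠ 0 ∧ ∀ L ∈ SIt m r, L.length + r = m + 1 ∧ L.sum = r) := by
  intro r
  induction r with
  | zero =>
    intro _
    constructor
    · simp [SIt]
    · intro L hL
      simp [SIt] at hL
      subst hL
      simp
  | succ r ih =>
    intro hr
    obtain ⟨hne, hmem⟩ := ih (by omega)
    constructor
    · -- nonempty
      obtain ⟨L0, hL0⟩ := Multiset.exists_mem_of_ne_zero hne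
      obtain ⟨hlen, _⟩ := hmem L0 hL0
      have h2 : 2 ≤ L0.length := by omega
      match L0, h2 with
      | a :: b :: L', _ =>
        have : ((b + (a + 1)) :: L') ∈ pMs 1 (a :: b :: L') := by simp [pMs, hMs]
        have hmem2 : ((b + (a + 1)) :: L') ∈ SIt m (r + 1) := by
          rw [SIt]
          exact Multiset.mem_bind.mpr ⟨_, hL0, this⟩
        intro h
        rw [h] at hmem2
        exact absurd hmem2 (Multiset.notMem_zero _)
    · intro L hL
      rw [SIt] at hL
      obtain ⟨L0, hL0, hLp⟩ := Multiset.mem_bind.mp hL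
      obtain ⟨hlen0, hsum0⟩ := hmem L0 hL0
      obtain ⟨hlen, hsum⟩ := pMs_mem hLp
      omega

end Stmt14Aux


/-!
STATEMENT 14: Let `R` be an associative unital ℂ-algebra, `ε : R → ℂ` a ℂ-algebra
homomorphism, `n ≥ 2`, `i ≠ j`.  Let `M` be a module over the Lie algebra `𝔤𝔩_n(R)`,
`m ∈ ℕ` and `v ∈ M` with: `(E_{ji}a)·v = 0` for all `a`;
`(E_{ii}a − E_{jj}a)·v = m·ε(a)·v` for all `a`; and `(E_{ij}1)^{m+1}·v = 0`.
Then `(E_{ij}P^m)·v = 0` for every `P ∈ R` with `ε(P) = 0`.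
-/

attribute [local instance] LieRing.ofAssociativeRing

open Stmt14Aux in
theorem stmt_14 (R : Type) [Ring R] [Algebra ℂ R] (ε : R →ₐ[ℂ] ℂ)
    (n : ℕ) (hn : 2 ≤ n) (i j : Fin n) (hij : i ≠ j)
    (M : Type) [AddCommGroup M] [Module ℂ M]
    [LieRingModule (Matrix (Fin n) (Fin n) R) M]
    [LieModule ℂ (Matrix (Fin n) (Fin n) R) M]
    (m : ℕ) (v : M)
    (h1 : ∀ a : R, ⁅Matrix.single j i a, v⁆ = 0)
    (h2 : ∀ a : R, ⁅Matrix.single i i a - Matrix.single j j a, v⁆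
            = ((m : ℂ) * ε a) • v)
    (h3 : (fun w => ⁅Matrix.single i j (1 : R), w⁆)^[m + 1] v = 0) :
    ∀ P : R, ε P = 0 → ⁅Matrix.single i j (P ^ m), v⁆ = 0 := by
  intro P hP
  -- abbreviations
  set gl := Matrix (Fin n) (Fin n) R with hgl
  let E : ℕ → gl := fun k => Matrix.single i j (P ^ k)
  let F : ℕ → gl := fun l => Matrix.single j i (P ^ l)
  let H : ℕ → gl := fun d =>
    Matrix.single i i (P ^ d) - Matrix.single j j (P ^ d)
  -- the vector attached to a list of degrees
  let φ : List ℕ → M := fun L => L.foldr (fun k x => ⁅E k, x⁆) v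
  have φ_nil : φ [] = v := rfl
  have φ_cons : ∀ k L, φ (k :: L) = ⁅E k, φ L⁆ := fun _ _ => rfl
  -- evaluation of a formal multiset of states
  let ev : Multiset (List ℕ) → M := fun S => (S.map φ).sum
  have ev_zero : ev 0 = 0 := rfl
  have ev_add : ∀ S T, ev (S + T) = ev S + ev T := by
    intro S T
    simp only [ev, Multiset.map_add, Multiset.sum_add]
  have ev_singleton : ∀ L, ev {L} = φ L := by
    intro L
    simp [ev]
  have lieSum : ∀ (X : gl) (S : Multiset (List ℕ)),
      ⁅X, ev S⁆ = (S.map (fun L => ⁅X, φ L⁆)).sum := by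
    intro X S
    have : ⁅X, (S.map φ).sum⁆
        = ((S.map φ).map (fun x => ⁅X, x⁆)).sum := by
      exact ((AddMonoidHom.mk' (fun x : M => ⁅X, x⁆) (lie_add X)).map_multiset_sum
        (S.map φ)).symm ▸ rfl
    simp only [ev]
    rw [this, Multiset.map_map]
    simp [Function.comp]
  have ev_map_cons : ∀ (k : ℕ) (S : Multiset (List ℕ)),
      ev (S.map (k :: ·)) = ⁅E k, ev S⁆ := by
    intro k S
    rw [lieSum]
    simp only [ev, Multiset.map_map]
    simp [Function.comp, φ_cons]
  have ev_bind : ∀ (S : Multiset (List ℕ)) (f : List ℕ → Multiset (List ℕ)),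
      ev (S.bind f) = (S.map (fun L => ev (f L))).sum := by
    intro S f
    simp only [ev, Multiset.map_bind, Multiset.sum_bind]
  -- matrix bracket computations
  have hji : j ≠ i := Ne.symm hij
  have bHE : ∀ d k : ℕ, ⁅H d, E k⁆ = E (k + d) + E (k + d) := by
    intro d k
    show ⁅Matrix.single i i (P ^ d) - Matrix.single j j (P ^ d),
        Matrix.single i j (P ^ k)⁆ = _
    rw [Ring.lie_def, sub_mul, mul_sub,
      Matrix.single_mul_single_same, Matrix.single_mul_single_of_ne (i := i) (j := j) (h := hji),
      Matrix.single_mul_single_of_ne (i := j) (j := j) (h := hji), Matrix.single_mul_single_same]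
    show Matrix.single i j (P ^ d * P ^ k) - 0 -
        (0 - Matrix.single i j (P ^ k * P ^ d)) = _
    have e1 : P ^ d * P ^ k = P ^ (k + d) := by rw [← pow_add, add_comm]
    have e2 : P ^ k * P ^ d = P ^ (k + d) := by rw [← pow_add]
    rw [e1, e2]
    show _ = Matrix.single i j (P ^ (k + d)) + Matrix.single i j (P ^ (k + d))
    abel
  have bFE : ∀ l k : ℕ, ⁅F l, E k⁆ = -(H (k + l)) := by
    intro l k
    show ⁅Matrix.single j i (P ^ l), Matrix.single i j (P ^ k)⁆ = _
    rw [Ring.lie_def, Matrix.single_mul_single_same, Matrix.single_mul_single_same]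
    have e1 : P ^ l * P ^ k = P ^ (k + l) := by rw [← pow_add, add_comm]
    have e2 : P ^ k * P ^ l = P ^ (k + l) := by rw [← pow_add]
    rw [e1, e2]
    show Matrix.single j j (P ^ (k + l)) - Matrix.single i i (P ^ (k + l))
      = -(Matrix.single i i (P ^ (k + l)) - Matrix.single j j (P ^ (k + l)))
    abel
  -- action relations
  have actH : ∀ (d k : ℕ) (x : M),
      ⁅H d, ⁅E k, x⁆⁆ = ⁅E k, ⁅H d, x⁆⁆ + (⁅E (k + d), x⁆ + ⁅E (k + d), x⁆) := by
    intro d k x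
    have := lie_lie (H d) (E k) x
    rw [bHE d k] at this
    rw [add_lie] at this
    rw [eq_sub_iff_add_eq] at this
    rw [← this]
    abel
  have actF : ∀ (l k : ℕ) (x : M),
      ⁅F l, ⁅E k, x⁆⁆ = ⁅E k, ⁅F l, x⁆⁆ - ⁅H (k + l), x⁆ := by
    intro l k x
    have := lie_lie (F l) (E k) x
    rw [bFE l k, neg_lie] at this
    rw [eq_sub_iff_add_eq] at this
    rw [← this]
    abel
  -- values on v
  have Hv : ∀ d : ℕ, 1 ≤ d → ⁅H d, v⁆ = 0 := by
    intro d hd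
    have := h2 (P ^ d)
    rw [map_pow, hP, zero_pow (by omega : d ≠ 0), mul_zero, zero_smul] at this
    exact this
  have Fv : ∀ l : ℕ, ⁅F l, v⁆ = 0 := fun l => h1 (P ^ l)
  -- main structural lemmas
  have HBig : ∀ d : ℕ, 1 ≤ d → ∀ L : List ℕ,
      ⁅H d, φ L⁆ = ev (hMs d L) + ev (hMs d L) := by
    intro d hd L
    induction L with
    | nil =>
      rw [φ_nil, Hv d hd]
      show (0 : M) = ev 0 + ev 0
      rw [ev_zero, add_zero]
    | cons k L ih =>
      rw [φ_cons, actH d k (φ L), ih, lie_add]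
      show _ = ev (((hMs d L).map (k :: ·)) + {(k + d) :: L})
        + ev (((hMs d L).map (k :: ·)) + {(k + d) :: L})
      rw [ev_add, ev_map_cons, ev_singleton, φ_cons]
      abel
  have PBig : ∀ l : ℕ, 1 ≤ l → ∀ L : List ℕ,
      ⁅F l, φ L⁆ = -(ev (pMs l L) + ev (pMs l L)) := by
    intro l hl L
    induction L with
    | nil =>
      rw [φ_nil, Fv l]
      show (0 : M) = -(ev 0 + ev 0)
      rw [ev_zero, add_zero, neg_zero]
    | cons k L ih =>
      rw [φ_cons, actF l k (φ L), ih, HBig (k + l) (by omega) L, lie_neg, lie_add]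
      show _ = -(ev (((pMs l L).map (k :: ·)) + hMs (k + l) L)
        + ev (((pMs l L).map (k :: ·)) + hMs (k + l) L))
      rw [ev_add, ev_map_cons]
      abel
  -- all the iterated sums vanish
  have EvS : ∀ r : ℕ, ev (SIt m r) = 0 := by
    intro r
    induction r with
    | zero =>
      show ev {List.replicate (m + 1) 0} = 0
      rw [ev_singleton]
      have key : ∀ c : ℕ, φ (List.replicate c 0)
          = (fun w => ⁅Matrix.single i j (1 : R), w⁆)^[c] v := by
        intro c
        induction c with
        | zero => rfl
        | succ c ihc =>
          rw [List.replicate_succ, φ_cons, ihc, Function.iterate_succ_apply']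
          show ⁅Matrix.single i j (P ^ 0), _⁆ = _
          rw [pow_zero]
      rw [key (m + 1), h3]
    | succ r ih =>
      have h0 : ⁅F 1, ev (SIt m r)⁆ = 0 := by rw [ih, lie_zero]
      rw [lieSum] at h0
      have h0' : ((SIt m r).map (fun L =>
          -(ev (pMs 1 L) + ev (pMs 1 L)))).sum = 0 := by
        rw [← h0]
        congr 1
        exact Multiset.map_congr rfl (fun L _ => (PBig 1 le_rfl L).symm)
      set T := ((SIt m r).map (fun L => ev (pMs 1 L))).sum with hT
      have h0'' : -(T + T) = 0 := by
        rw [← h0']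
        have : ((SIt m r).map (fun L => -(ev (pMs 1 L) + ev (pMs 1 L)))).sum
            = -(((SIt m r).map (fun L => ev (pMs 1 L) + ev (pMs 1 L))).sum) := by
          rw [← Multiset.sum_map_neg', Multiset.map_map]
          rfl
        rw [this, Multiset.sum_map_add]
      have hTT : T + T = 0 := neg_eq_zero.mp h0''
      have hT2 : (2 : ℂ) • T = 0 := by rw [two_smul]; exact hTT
      have hT0 : T = 0 := by
        rcases smul_eq_zero.mp hT2 with h | h
        · exact absurd h two_ne_zero
        · exact h
      have h2' : ev (SIt m (r + 1)) = T := by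
        show ev ((SIt m r).bind (pMs 1)) = T
        rw [ev_bind]
      rw [h2', hT0]
  -- conclude
  obtain ⟨hne, hmem⟩ := SIt_spec m m le_rfl
  have hall : ∀ L ∈ SIt m m, L = [m] := by
    intro L hL
    obtain ⟨hlen, hsum⟩ := hmem L hL
    cases L with
    | nil => simp at hlen
    | cons a L' =>
      cases L' with
      | nil =>
        simp at hsum
        rw [hsum]
      | cons b L'' =>
        simp at hlen
        omega
  have hcard : Multiset.card (SIt m m) ≠ 0 := by
    intro h
    exact hne (Multiset.card_eq_zero.mp h)
  have hrepl : (SIt m m).map φ = Multiset.replicate (Multiset.card (SIt m m)) (φ [m]) := by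
    rw [Multiset.eq_replicate]
    constructor
    · rw [Multiset.card_map]
    · intro b hb
      obtain ⟨L, hL, rfl⟩ := Multiset.mem_map.mp hb
      rw [hall L hL]
  have : ev (SIt m m) = (Multiset.card (SIt m m)) • φ [m] := by
    show ((SIt m m).map φ).sum = _
    rw [hrepl, Multiset.sum_replicate]
  rw [EvS m] at this
  have hC : ((Multiset.card (SIt m m) : ℂ)) • φ [m] = 0 := by
    rw [Nat.cast_smul_eq_nsmul]
    exact this.symm
  rcases smul_eq_zero.mp hC with h | h
  · exact absurd h (Nat.cast_ne_zero.mpr hcard)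
  · -- φ [m] is the goal
    have : φ [m] = ⁅Matrix.single i j (P ^ m), v⁆ := rfl
    rw [← this]
    exact h
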